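/- Let G be a finite group, H a subgroup of G, (π, V) a unitary representation on a finite-dimensional complex Hilbert space, v₀ ∈ V, and define ℓ(v) = ∑_{h ∈ H} ⟨π(h)v, v₀⟩ and φ(g) = ⟨π(g)v₀, v₀⟩. Then for every function f : G → ℂ, ∑_{v ∈ B} ℓ(π(f)v)·conj(ℓ(v)) = ∑_{h₁ ∈ H} ∑_{h₂ ∈ H} ∑_{g ∈ G} f(g)·φ(h₂ g h₁), where B is any orthonormal basis of V and π(f)v = ∑_{g ∈ G} f(g)π(g)v. -/

import Mathlib

/-- Finite-group form of the spherical character identity: with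
`ℓ(v) = ∑_{h ∈ H} ⟨π(h)v, v₀⟩` and `φ(g) = ⟨π(g)v₀, v₀⟩` (paper convention,
i.e. Mathlib's `inner ℂ v₀ _`), for every `f : G → ℂ` and every orthonormal
basis `B`, `∑_{v ∈ B} ℓ(π(f)v) conj(ℓ(v)) = ∑_{h₁,h₂ ∈ H} ∑_{g} f(g) φ(h₂gh₁)`. -/
theorem stmt_11 {G : Type*} [Group G] [Fintype G]
    {V : Type*} [NormedAddCommGroup V] [InnerProductSpace ℂ V]
    [FiniteDimensional ℂ V]
    (π : G →* (V ≃ₗᵢ[ℂ] V)) (H : Subgroup G) [Fintype H]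
    (v₀ : V)
    (ℓ : V → ℂ) (hℓ : ∀ v, ℓ v = ∑ h : H, (inner ℂ v₀ (π h v) : ℂ))
    (φ : G → ℂ) (hφ : ∀ g, φ g = (inner ℂ v₀ (π g v₀) : ℂ))
    (f : G → ℂ)
    {ι : Type*} [Fintype ι] (b : OrthonormalBasis ι ℂ V) :
    ∑ i : ι, ℓ (∑ g : G, f g • π g (b i)) * (starRingEnd ℂ) (ℓ (b i))
      = ∑ h₁ : H, ∑ h₂ : H, ∑ g : G, f g * φ (h₂ * g * h₁) := by
  classical
  have happ : ∀ (a c : G) (y : V), π (a * c) y = π a (π c y) := by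
    intro a c y; rw [map_mul]; rfl
  have hinvapp : ∀ (a : G) (y : V), π a (π a⁻¹ y) = y := by
    intro a y
    rw [← happ, mul_inv_cancel, map_one, LinearIsometryEquiv.coe_one, id_eq]
  have hshift : ∀ (a : G) (x y : V), (inner ℂ x (π a y) : ℂ) = inner ℂ (π a⁻¹ x) y := by
    intro a x y
    rw [← (π a).inner_map_map (π a⁻¹ x) y, hinvapp]
  -- expand ℓ applied to π(f)(b i)
  have L1 : ∀ i, ℓ (∑ g : G, f g • π g (b i)) =
      ∑ h2 : H, ∑ g : G, f g * inner ℂ (π ((h2 : G) * g)⁻¹ v₀) (b i) := by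
    intro i
    rw [hℓ]
    refine Finset.sum_congr rfl fun h2 _ => ?_
    rw [map_sum, inner_sum]
    refine Finset.sum_congr rfl fun g _ => ?_
    rw [map_smul, inner_smul_right, ← happ, hshift]
  have L2 : ∀ i, (starRingEnd ℂ) (ℓ (b i)) =
      ∑ h1 : H, (inner ℂ (b i) (π ((h1 : G))⁻¹ v₀) : ℂ) := by
    intro i
    rw [hℓ, map_sum]
    refine Finset.sum_congr rfl fun h1 _ => ?_
    rw [hshift, inner_conj_symm]
  calc
    ∑ i : ι, ℓ (∑ g : G, f g • π g (b i)) * (starRingEnd ℂ) (ℓ (b i))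
        = ∑ i : ι, ∑ h1 : H, ∑ h2 : H, ∑ g : G,
            f g * ((inner ℂ (π ((h2 : G) * g)⁻¹ v₀) (b i) : ℂ) *
              inner ℂ (b i) (π ((h1 : G))⁻¹ v₀)) := by
      refine Finset.sum_congr rfl fun i _ => ?_
      rw [L1 i, L2 i, Finset.mul_sum]
      refine Finset.sum_congr rfl fun h1 _ => ?_
      rw [Finset.sum_mul]
      refine Finset.sum_congr rfl fun h2 _ => ?_
      rw [Finset.sum_mul]
      refine Finset.sum_congr rfl fun g _ => ?_
      ring
    _ = ∑ h1 : H, ∑ h2 : H, ∑ g : G,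
            f g * ∑ i : ι, (inner ℂ (π ((h2 : G) * g)⁻¹ v₀) (b i) : ℂ) *
              inner ℂ (b i) (π ((h1 : G))⁻¹ v₀) := by
      rw [Finset.sum_comm]
      refine Finset.sum_congr rfl fun h1 _ => ?_
      rw [Finset.sum_comm]
      refine Finset.sum_congr rfl fun h2 _ => ?_
      rw [Finset.sum_comm]
      refine Finset.sum_congr rfl fun g _ => ?_
      rw [Finset.mul_sum]
    _ = ∑ h1 : H, ∑ h2 : H, ∑ g : G,
            f g * (inner ℂ v₀ (π ((h2 : G) * g * (h1 : G)⁻¹) v₀) : ℂ) := by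
      refine Finset.sum_congr rfl fun h1 _ => ?_
      refine Finset.sum_congr rfl fun h2 _ => ?_
      refine Finset.sum_congr rfl fun g _ => ?_
      rw [b.sum_inner_mul_inner, ← hshift, ← happ]
    _ = ∑ h₁ : H, ∑ h₂ : H, ∑ g : G, f g * φ (h₂ * g * h₁) := by
      refine Fintype.sum_equiv (Equiv.inv H) _ _ fun h1 => ?_
      refine Finset.sum_congr rfl fun h2 _ => ?_
      refine Finset.sum_congr rfl fun g _ => ?_
      rw [hφ]
      congr 2
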